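/- Pasting property of the word measure: for all words δ₀, γ₁, τ₁, δ₁, γ₂, τ₂, δ₂ over P, if |δ₀τ₁| ≼′ |δ₀| + |γ₁|, |γ₁δ₁| ≼′ |δ₀| + |γ₁|, |δ₁τ₂| ≼′ |δ₁| + |γ₂|, and |γ₂δ₂| ≼′ |δ₁| + |γ₂|, then |δ₀τ₁τ₂| ≼′ |δ₀| + |γ₁γ₂| and |γ₁γ₂δ₂| ≼′ |δ₀| + |γ₁γ₂|, where juxtaposition of words denotes concatenation. -/

import Mathlib

/-- The measure of a word over `P` with respect to a strict order `lt` on `P`,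
valued in finitely supported multisets `P →₀ ℕ`: `|ε| = 0` and
`|I σ| = δ_I + |σ^(I)|`, where `σ^(I)` is `σ` with every letter `lt`-below `I`
removed. -/
noncomputable def wordMeas {P : Type*} (lt : P → P → Prop) : List P → (P →₀ ℕ)
  | [] => 0
  | I :: σ =>
      Finsupp.single I 1 +
        wordMeas lt (σ.filter fun J => @decide (¬ lt J I) (Classical.propDecidable _))
termination_by l => l.length
decreasing_by
  simp only [List.length_cons]
  simp only [List.length_unattach]
  exact Nat.lt_succ_of_le ((List.length_filter_le _ σ.attach).trans (by simp))

/-- The Dershowitz–Manna-style strict order on finitely supported multisets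
`P →₀ ℕ` induced by a strict order `lt` on `P`. -/
def DMLt {P : Type*} (lt : P → P → Prop) (M N : P →₀ ℕ) : Prop :=
  ∃ X Y Z : P →₀ ℕ, M = Z + X ∧ N = Z + Y ∧ Y ≠ 0 ∧
    ∀ I : P, X I ≠ 0 → ∃ J : P, Y J ≠ 0 ∧ lt I J

/-- The reflexive closure `≼′` of the Dershowitz–Manna-style order. -/
def DMLe {P : Type*} (lt : P → P → Prop) (M N : P →₀ ℕ) : Prop :=
  DMLt lt M N ∨ M = N

section Auxiliary

variable {P : Type*}

/-! ### Restriction of finsupps to predicates -/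

/-- Restriction of a finitely supported function to a predicate. -/
noncomputable def restrP (p : P → Prop) (ν : P →₀ ℕ) : P →₀ ℕ :=
  haveI := Classical.decPred p
  Finsupp.onFinset ν.support (fun K => if p K then ν K else 0) (by
    intro a ha
    rw [Finsupp.mem_support_iff]
    intro h
    simp [h] at ha)

lemma restrP_apply_pos (p : P → Prop) (ν : P →₀ ℕ) {K : P} (h : p K) :
    restrP p ν K = ν K := by
  simp only [restrP, Finsupp.onFinset_apply]
  rw [if_pos h]

lemma restrP_apply_neg (p : P → Prop) (ν : P →₀ ℕ) {K : P} (h : ¬ p K) :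
    restrP p ν K = 0 := by
  simp only [restrP, Finsupp.onFinset_apply]
  rw [if_neg h]

lemma restrP_restrP (p q : P → Prop) (ν : P →₀ ℕ) :
    restrP p (restrP q ν) = restrP (fun K => p K ∧ q K) ν := by
  ext K
  by_cases hp : p K <;> by_cases hq : q K <;>
    simp [restrP_apply_pos, restrP_apply_neg, hp, hq]

lemma restrP_congr {p q : P → Prop} (ν : P →₀ ℕ) (h : ∀ K, p K ↔ q K) :
    restrP p ν = restrP q ν := by
  ext K
  by_cases hp : p K
  · rw [restrP_apply_pos _ _ hp, restrP_apply_pos _ _ ((h K).mp hp)]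
  · rw [restrP_apply_neg _ _ hp, restrP_apply_neg _ _ (fun hq => hp ((h K).mpr hq))]

lemma restrP_add (p : P → Prop) (μ ν : P →₀ ℕ) :
    restrP p (μ + ν) = restrP p μ + restrP p ν := by
  ext K
  by_cases hp : p K <;>
    simp [restrP_apply_pos, restrP_apply_neg, hp]

lemma restrP_add_not (p : P → Prop) (ν : P →₀ ℕ) :
    restrP p ν + restrP (fun K => ¬ p K) ν = ν := by
  ext K
  by_cases hp : p K <;>
    simp [restrP_apply_pos, restrP_apply_neg, hp]

lemma restrP_le (p : P → Prop) (ν : P →₀ ℕ) (K : P) : restrP p ν K ≤ ν K := by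
  by_cases hp : p K
  · rw [restrP_apply_pos _ _ hp]
  · rw [restrP_apply_neg _ _ hp]; exact Nat.zero_le _

lemma restrP_zero (p : P → Prop) : restrP p (0 : P →₀ ℕ) = 0 := by
  ext K
  by_cases hp : p K
  · rw [restrP_apply_pos _ _ hp]
  · rw [restrP_apply_neg _ _ hp]; rfl

lemma restrP_single_pos (p : P → Prop) {J : P} (h : p J) :
    restrP p (Finsupp.single J (1:ℕ)) = Finsupp.single J 1 := by
  classical
  ext K
  by_cases hp : p K
  · rw [restrP_apply_pos _ _ hp]
  · rw [restrP_apply_neg _ _ hp, Finsupp.single_apply,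
      if_neg (fun hJK : J = K => hp (hJK ▸ h))]

lemma restrP_single_neg (p : P → Prop) {J : P} (h : ¬ p J) :
    restrP p (Finsupp.single J (1:ℕ)) = 0 := by
  classical
  ext K
  by_cases hp : p K
  · rw [restrP_apply_pos _ _ hp, Finsupp.single_apply,
      if_neg (fun hJK : J = K => h (hJK ▸ hp))]
    rfl
  · rw [restrP_apply_neg _ _ hp]; rfl

variable {lt : P → P → Prop}

/-! ### Maximal elements of finite sets -/

/-- Any nonempty finite set has a maximal element w.r.t. an irreflexive
transitive relation. -/
lemma exists_lt_max (hirr : ∀ p : P, ¬ lt p p)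
    (htrans : ∀ p q r : P, lt p q → lt q r → lt p r) (S : Finset P) :
    S.Nonempty → ∃ I ∈ S, ∀ J ∈ S, ¬ lt I J := by
  classical
  induction S using Finset.induction_on with
  | empty => rintro ⟨x, hx⟩; simp at hx
  | @insert a s ha IH =>
    intro _
    rcases s.eq_empty_or_nonempty with rfl | hs
    · refine ⟨a, Finset.mem_insert_self _ _, ?_⟩
      intro J hJ
      rcases Finset.mem_insert.mp hJ with rfl | hJ
      · exact hirr _
      · simp at hJ
    · obtain ⟨m, hm, hmax⟩ := IH hs
      by_cases hma : lt m a
      · refine ⟨a, Finset.mem_insert_self _ _, ?_⟩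
        intro J hJ
        rcases Finset.mem_insert.mp hJ with rfl | hJ
        · exact hirr _
        · exact fun h => hmax J hJ (htrans m a J hma h)
      · refine ⟨m, Finset.mem_insert_of_mem hm, ?_⟩
        intro J hJ
        rcases Finset.mem_insert.mp hJ with rfl | hJ
        · exact hma
        · exact hmax J hJ

/-! ### A pointwise characterization of the Dershowitz–Manna order -/

/-- Pointwise characterization of the DM order. -/
def CharLt (lt : P → P → Prop) (M N : P →₀ ℕ) : Prop :=
  M ≠ N ∧ ∀ I, N I < M I → ∃ J, lt I J ∧ M J < N J

/-- Reflexive closure of `CharLt`. -/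
def CharLe (lt : P → P → Prop) (M N : P →₀ ℕ) : Prop :=
  CharLt lt M N ∨ M = N

lemma dmlt_iff_charlt (hirr : ∀ p : P, ¬ lt p p)
    (htrans : ∀ p q r : P, lt p q → lt q r → lt p r) (M N : P →₀ ℕ) :
    DMLt lt M N ↔ CharLt lt M N := by
  constructor
  · rintro ⟨X, Y, Z, hM, hN, hY, hcov⟩
    constructor
    · rintro rfl
      have hXY : X = Y := by
        ext a
        have h1 : M a = Z a + X a := by rw [hM]; simp
        have h2 : M a = Z a + Y a := by rw [hN]; simp
        omega
      obtain ⟨I, hI, hImax⟩ := exists_lt_max hirr htrans Y.support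
        (Finsupp.support_nonempty_iff.mpr hY)
      rw [Finsupp.mem_support_iff] at hI
      obtain ⟨J, hJ, hIJ⟩ := hcov I (by rw [hXY]; exact hI)
      exact hImax J (Finsupp.mem_support_iff.mpr hJ) hIJ
    · intro I hlt
      have hXI : Y I < X I := by
        have h1 : M I = Z I + X I := by rw [hM]; simp
        have h2 : N I = Z I + Y I := by rw [hN]; simp
        omega
      obtain ⟨J₀, hJ₀, hIJ₀⟩ := hcov I (by omega)
      classical
      have hSn : (Y.support.filter (fun J => lt I J)).Nonempty :=
        ⟨J₀, Finset.mem_filter.mpr ⟨Finsupp.mem_support_iff.mpr hJ₀, hIJ₀⟩⟩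
      obtain ⟨Js, hJs, hJmax⟩ := exists_lt_max hirr htrans _ hSn
      obtain ⟨hJsY, hIJs⟩ := Finset.mem_filter.mp hJs
      rw [Finsupp.mem_support_iff] at hJsY
      have hXJs : X Js = 0 := by
        by_contra hX
        obtain ⟨J', hJ', hJJ'⟩ := hcov Js hX
        exact hJmax J' (Finset.mem_filter.mpr
          ⟨Finsupp.mem_support_iff.mpr hJ', htrans I Js J' hIJs hJJ'⟩) hJJ'
      refine ⟨Js, hIJs, ?_⟩
      have h1 : M Js = Z Js + X Js := by rw [hM]; simp
      have h2 : N Js = Z Js + Y Js := by rw [hN]; simp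
      omega
  · rintro ⟨hne, hchar⟩
    classical
    refine ⟨M - Finsupp.zipWith min (min_self 0) M N,
      N - Finsupp.zipWith min (min_self 0) M N,
      Finsupp.zipWith min (min_self 0) M N, ?_, ?_, ?_, ?_⟩
    · ext a
      simp only [Finsupp.add_apply, Finsupp.tsub_apply, Finsupp.zipWith_apply]
      omega
    · ext a
      simp only [Finsupp.add_apply, Finsupp.tsub_apply, Finsupp.zipWith_apply]
      omega
    · intro h0
      have hle : ∀ a, N a ≤ M a := by
        intro a
        have := Finsupp.ext_iff.mp h0 a
        simp only [Finsupp.tsub_apply, Finsupp.zipWith_apply, Finsupp.coe_zero,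
          Pi.zero_apply] at this
        omega
      obtain ⟨a, ha⟩ := Finsupp.ne_iff.mp hne
      have : N a < M a := lt_of_le_of_ne (hle a) (fun h => ha h.symm)
      obtain ⟨J, _, hJ⟩ := hchar a this
      exact absurd (hle J) (by omega)
    · intro I hI
      simp only [Finsupp.tsub_apply, Finsupp.zipWith_apply] at hI
      have : N I < M I := by omega
      obtain ⟨J, hIJ, hJ⟩ := hchar I this
      refine ⟨J, ?_, hIJ⟩
      simp only [Finsupp.tsub_apply, Finsupp.zipWith_apply]
      omega

lemma dmle_iff_charle (hirr : ∀ p : P, ¬ lt p p)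
    (htrans : ∀ p q r : P, lt p q → lt q r → lt p r) (M N : P →₀ ℕ) :
    DMLe lt M N ↔ CharLe lt M N :=
  or_congr (dmlt_iff_charlt hirr htrans M N) Iff.rfl

/-! ### Properties of the characterized order -/

lemma charlt_trans (hirr : ∀ p : P, ¬ lt p p)
    (htrans : ∀ p q r : P, lt p q → lt q r → lt p r) {M N O : P →₀ ℕ}
    (h1 : CharLt lt M N) (h2 : CharLt lt N O) : CharLt lt M O := by
  classical
  obtain ⟨hMN, cMN⟩ := h1
  obtain ⟨hNO, cNO⟩ := h2
  constructor
  · rintro rfl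
    obtain ⟨a, ha⟩ := Finsupp.ne_iff.mp hMN
    have haD : a ∈ (M.support ∪ N.support).filter (fun I => M I ≠ N I) := by
      rw [Finset.mem_filter, Finset.mem_union, Finsupp.mem_support_iff,
        Finsupp.mem_support_iff]
      exact ⟨by omega, ha⟩
    obtain ⟨I, hI, hImax⟩ := exists_lt_max hirr htrans _ ⟨a, haD⟩
    rw [Finset.mem_filter] at hI
    rcases Nat.lt_or_ge (N I) (M I) with h | h
    · obtain ⟨J, hIJ, hJ⟩ := cMN I h
      exact hImax J (by
        rw [Finset.mem_filter, Finset.mem_union, Finsupp.mem_support_iff,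
          Finsupp.mem_support_iff]
        exact ⟨by omega, by omega⟩) hIJ
    · have h' : M I < N I := lt_of_le_of_ne h (hI.2)
      obtain ⟨J, hIJ, hJ⟩ := cNO I h'
      exact hImax J (by
        rw [Finset.mem_filter, Finset.mem_union, Finsupp.mem_support_iff,
          Finsupp.mem_support_iff]
        exact ⟨by omega, by omega⟩) hIJ
  · intro I hMO
    set B := (M.support ∪ N.support ∪ O.support).filter
      (fun J => lt I J ∧ (M J < N J ∨ N J < O J)) with hBdef
    have memB : ∀ J, lt I J → (M J < N J ∨ N J < O J) → J ∈ B := by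
      intro J h1 h2
      rw [hBdef, Finset.mem_filter, Finset.mem_union, Finset.mem_union,
        Finsupp.mem_support_iff, Finsupp.mem_support_iff, Finsupp.mem_support_iff]
      exact ⟨by omega, h1, h2⟩
    have hBne : B.Nonempty := by
      rcases Nat.lt_or_ge (N I) (M I) with h | h
      · obtain ⟨J, hIJ, hJ⟩ := cMN I h
        exact ⟨J, memB J hIJ (Or.inl hJ)⟩
      · have h' : O I < N I := by omega
        obtain ⟨J, hIJ, hJ⟩ := cNO I h'
        exact ⟨J, memB J hIJ (Or.inr hJ)⟩
    obtain ⟨Js, hJs, hJmax⟩ := exists_lt_max hirr htrans _ hBne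
    rw [hBdef, Finset.mem_filter] at hJs
    obtain ⟨-, hIJs, hcase⟩ := hJs
    refine ⟨Js, hIJs, ?_⟩
    by_contra hc
    push_neg at hc
    rcases hcase with h | h
    · obtain ⟨J', hJJ', hJ'⟩ := cNO Js (by omega)
      exact hJmax J' (memB J' (htrans I Js J' hIJs hJJ') (Or.inr hJ')) hJJ'
    · obtain ⟨J', hJJ', hJ'⟩ := cMN Js (by omega)
      exact hJmax J' (memB J' (htrans I Js J' hIJs hJJ') (Or.inl hJ')) hJJ'

lemma charle_trans (hirr : ∀ p : P, ¬ lt p p)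
    (htrans : ∀ p q r : P, lt p q → lt q r → lt p r) {M N O : P →₀ ℕ}
    (h1 : CharLe lt M N) (h2 : CharLe lt N O) : CharLe lt M O := by
  rcases h1 with h1 | rfl
  · rcases h2 with h2 | rfl
    · exact Or.inl (charlt_trans hirr htrans h1 h2)
    · exact Or.inl h1
  · exact h2

lemma charle_add_left {K M N : P →₀ ℕ} (h : CharLe lt M N) :
    CharLe lt (K + M) (K + N) := by
  rcases h with ⟨hne, hc⟩ | rfl
  · refine Or.inl ⟨fun h => hne (by
      ext a
      have := Finsupp.ext_iff.mp h a
      simp only [Finsupp.add_apply] at this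
      omega), ?_⟩
    intro I hI
    simp only [Finsupp.add_apply] at hI
    obtain ⟨J, hIJ, hJ⟩ := hc I (by omega)
    exact ⟨J, hIJ, by simp only [Finsupp.add_apply]; omega⟩
  · exact Or.inr rfl

lemma charle_cancel {K M N : P →₀ ℕ} (h : CharLe lt (K + M) (K + N)) :
    CharLe lt M N := by
  rcases h with ⟨hne, hc⟩ | he
  · by_cases hMN : M = N
    · exact Or.inr hMN
    refine Or.inl ⟨hMN, ?_⟩
    intro I hI
    obtain ⟨J, hIJ, hJ⟩ := hc I (by simp only [Finsupp.add_apply]; omega)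
    simp only [Finsupp.add_apply] at hJ
    exact ⟨J, hIJ, by omega⟩
  · refine Or.inr ?_
    ext a
    have := Finsupp.ext_iff.mp he a
    simp only [Finsupp.add_apply] at this
    omega

lemma charle_of_le {M N : P →₀ ℕ} (h : ∀ a, M a ≤ N a) : CharLe lt M N := by
  by_cases hMN : M = N
  · exact Or.inr hMN
  · exact Or.inl ⟨hMN, fun I hI => absurd (h I) (by omega)⟩

/-- Restriction by an upward-closed predicate preserves `CharLe`. -/
lemma charle_restrP (htrans : ∀ p q r : P, lt p q → lt q r → lt p r)
    {p : P → Prop} (hp : ∀ K J, lt K J → p K → p J) {M N : P →₀ ℕ}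
    (h : CharLe lt M N) : CharLe lt (restrP p M) (restrP p N) := by
  rcases h with ⟨hne, hc⟩ | rfl
  · by_cases heq : restrP p M = restrP p N
    · exact Or.inr heq
    refine Or.inl ⟨heq, ?_⟩
    intro I hI
    by_cases hpI : p I
    · rw [restrP_apply_pos _ _ hpI, restrP_apply_pos _ _ hpI] at hI
      obtain ⟨J, hIJ, hJ⟩ := hc I hI
      have hpJ : p J := hp I J hIJ hpI
      exact ⟨J, hIJ, by rw [restrP_apply_pos _ _ hpJ, restrP_apply_pos _ _ hpJ]; omega⟩
    · rw [restrP_apply_neg _ _ hpI, restrP_apply_neg _ _ hpI] at hI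
      omega
  · exact Or.inr rfl

/-- Key lemma: adding material strictly below the support of `W` but not strictly
below the support of `A` to `A ≼′ W` preserves the bound. -/
lemma charle_key (hirr : ∀ p : P, ¬ lt p p)
    (htrans : ∀ p q r : P, lt p q → lt q r → lt p r) {A W E : P →₀ ℕ}
    (hAW : CharLe lt A W)
    (hE : ∀ K, E K ≠ 0 →
      (∃ J, W J ≠ 0 ∧ lt K J) ∧ ∀ J, A J ≠ 0 → ¬ lt K J) :
    CharLe lt (A + E) W := by
  classical
  by_cases hB : A + E = W
  · exact Or.inr hB
  refine Or.inl ⟨hB, ?_⟩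
  intro I hI
  simp only [Finsupp.add_apply] at hI
  set V₁ := W.support.filter (fun J => lt I J ∧ A J < W J) with hVdef
  have memV : ∀ J, lt I J → A J < W J → J ∈ V₁ := by
    intro J h1 h2
    rw [hVdef, Finset.mem_filter, Finsupp.mem_support_iff]
    exact ⟨by omega, h1, h2⟩
  by_cases hV : V₁.Nonempty
  · obtain ⟨Js, hJs, hJmax⟩ := exists_lt_max hirr htrans _ hV
    rw [hVdef, Finset.mem_filter] at hJs
    obtain ⟨-, hIJs, hAJs⟩ := hJs
    have hEJs : E Js = 0 := by
      by_contra hEne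
      obtain ⟨⟨J', hWJ', hltJ'⟩, hnb⟩ := hE Js hEne
      have hAJ' : A J' = 0 := by
        by_contra hA
        exact hnb J' hA hltJ'
      exact hJmax J' (memV J' (htrans I Js J' hIJs hltJ') (by omega)) hltJ'
    exact ⟨Js, hIJs, by simp only [Finsupp.add_apply]; omega⟩
  · exfalso
    have hge : ∀ J, lt I J → W J ≤ A J := by
      intro J hIJ
      by_contra hc
      exact hV ⟨J, memV J hIJ (by omega)⟩
    by_cases hEI : E I = 0
    · rcases hAW with ⟨hne, hc⟩ | rfl
      · obtain ⟨J, hIJ, hJ⟩ := hc I (by omega)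
        exact absurd (hge J hIJ) (by omega)
      · omega
    · obtain ⟨⟨J₀, hWJ₀, hltJ₀⟩, hnb⟩ := hE I hEI
      have hAJ₀ : A J₀ = 0 := by
        by_contra hA
        exact hnb J₀ hA hltJ₀
      have := hge J₀ hltJ₀
      omega

/-! ### Word measure lemmas -/

/-- The boolean filter keeping letters not below `I`. -/
noncomputable abbrev keepB (lt : P → P → Prop) (I : P) : P → Bool :=
  fun J => @decide (¬ lt J I) (Classical.propDecidable _)

/-- The predicate asserting a letter is not strictly below any letter of `σ`. -/
def wNotBelow (lt : P → P → Prop) (σ : List P) (K : P) : Prop :=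
  ∀ I ∈ σ, ¬ lt K I

lemma keepB_eq_true {I J : P} : keepB lt I J = true ↔ ¬ lt J I := by
  simp [keepB, decide_eq_true_iff]

lemma wordMeas_nil : wordMeas lt ([] : List P) = 0 := by rw [wordMeas]

lemma wordMeas_cons (I : P) (σ : List P) :
    wordMeas lt (I :: σ) =
      Finsupp.single I 1 + wordMeas lt (σ.filter (keepB lt I)) := by
  rw [wordMeas]

lemma wordMeas_supp : ∀ (σ : List P) (J : P), wordMeas lt σ J ≠ 0 → J ∈ σ := by
  have key : ∀ (n : ℕ) (σ : List P), σ.length ≤ n →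
      ∀ J, wordMeas lt σ J ≠ 0 → J ∈ σ := by
    intro n
    induction n with
    | zero =>
      intro σ h
      rw [List.eq_nil_of_length_eq_zero (Nat.le_zero.mp h), wordMeas_nil]
      simp
    | succ m IH =>
      intro σ h J hJ
      classical
      match σ with
      | [] => rw [wordMeas_nil] at hJ; simp at hJ
      | I :: τ =>
        rw [wordMeas_cons, Finsupp.add_apply] at hJ
        rcases Nat.eq_zero_or_pos ((Finsupp.single I 1 : P →₀ ℕ) J) with h0 | hpos
        · have h1 : wordMeas lt (τ.filter (keepB lt I)) J ≠ 0 := by omega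
          have h2 : (τ.filter (keepB lt I)).length ≤ m := by
            have := List.length_filter_le (keepB lt I) τ
            simp only [List.length_cons] at h
            omega
          exact List.mem_cons_of_mem _ (List.mem_of_mem_filter (IH _ h2 J h1))
        · have : J = I := by
            by_contra hne
            rw [Finsupp.single_apply, if_neg (fun h => hne h.symm)] at hpos
            omega
          exact this ▸ List.mem_cons_self (a := I) (l := τ)
  exact fun σ => key σ.length σ le_rfl

lemma wordMeas_mem :
    ∀ (σ : List P) (I : P), I ∈ σ →
      wordMeas lt σ I ≠ 0 ∨ ∃ j, wordMeas lt σ j ≠ 0 ∧ lt I j := by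
  have key : ∀ (n : ℕ) (σ : List P), σ.length ≤ n → ∀ I, I ∈ σ →
      wordMeas lt σ I ≠ 0 ∨ ∃ j, wordMeas lt σ j ≠ 0 ∧ lt I j := by
    intro n
    induction n with
    | zero =>
      intro σ h
      rw [List.eq_nil_of_length_eq_zero (Nat.le_zero.mp h)]
      simp
    | succ m IH =>
      intro σ h I hI
      classical
      match σ with
      | [] => simp at hI
      | J :: τ =>
        have hJne : wordMeas lt (J :: τ) J ≠ 0 := by
          rw [wordMeas_cons, Finsupp.add_apply, Finsupp.single_apply, if_pos rfl]
          omega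
        rcases List.mem_cons.mp hI with rfl | hIτ
        · exact Or.inl hJne
        · by_cases hlt : lt I J
          · exact Or.inr ⟨J, hJne, hlt⟩
          · have hIf : I ∈ τ.filter (keepB lt J) :=
              List.mem_filter.mpr ⟨hIτ, keepB_eq_true.mpr hlt⟩
            have h2 : (τ.filter (keepB lt J)).length ≤ m := by
              have := List.length_filter_le (keepB lt J) τ
              simp only [List.length_cons] at h
              omega
            have hlift : ∀ j, wordMeas lt (τ.filter (keepB lt J)) j ≠ 0 →
                wordMeas lt (J :: τ) j ≠ 0 := by
              intro j hj
              rw [wordMeas_cons, Finsupp.add_apply]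
              omega
            rcases IH _ h2 I hIf with h' | ⟨j, hj, hltj⟩
            · exact Or.inl (hlift I h')
            · exact Or.inr ⟨j, hlift j hj, hltj⟩
  exact fun σ => key σ.length σ le_rfl

lemma wordMeas_filter (htrans : ∀ p q r : P, lt p q → lt q r → lt p r) :
    ∀ (σ : List P) (I : P),
      wordMeas lt (σ.filter (keepB lt I)) =
        restrP (fun K => ¬ lt K I) (wordMeas lt σ) := by
  have key : ∀ (n : ℕ) (σ : List P), σ.length ≤ n → ∀ I,
      wordMeas lt (σ.filter (keepB lt I)) =
        restrP (fun K => ¬ lt K I) (wordMeas lt σ) := by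
    intro n
    induction n with
    | zero =>
      intro σ h I
      rw [List.eq_nil_of_length_eq_zero (Nat.le_zero.mp h)]
      rw [List.filter_nil, wordMeas_nil, restrP_zero]
    | succ m IH =>
      intro σ h I
      match σ with
      | [] => rw [List.filter_nil, wordMeas_nil, restrP_zero]
      | J :: τ =>
        have hlen : τ.length ≤ m := by simpa using h
        have hlenf : ∀ (f : P → Bool), (τ.filter f).length ≤ m :=
          fun f => le_trans (List.length_filter_le f τ) hlen
        by_cases hJI : lt J I
        · have hkJ : keepB lt I J = false := by simp [keepB, hJI]
          rw [List.filter_cons, hkJ]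
          simp only [Bool.false_eq_true, if_false]
          calc wordMeas lt (τ.filter (keepB lt I))
              = restrP (fun K => ¬ lt K I) (wordMeas lt τ) := IH _ hlen I
            _ = restrP (fun K => ¬ lt K I) (wordMeas lt (τ.filter (keepB lt J))) := by
                have e2 : (τ.filter (keepB lt J)).filter (keepB lt I)
                    = τ.filter (keepB lt I) := by
                  rw [List.filter_filter]
                  apply List.filter_congr
                  intro a _
                  by_cases ha : lt a I
                  · simp [keepB, ha]
                  · have : ¬ lt a J := fun h' => ha (htrans a J I h' hJI)
                    simp [keepB, ha, this]
                rw [← IH _ (hlenf _) I, e2, IH _ hlen I]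
            _ = restrP (fun K => ¬ lt K I)
                  (Finsupp.single J 1 + wordMeas lt (τ.filter (keepB lt J))) := by
                rw [restrP_add,
                  restrP_single_neg (fun K => ¬ lt K I) (by simpa using hJI),
                  zero_add]
            _ = restrP (fun K => ¬ lt K I) (wordMeas lt (J :: τ)) := by
                rw [wordMeas_cons]
        · have hkJ : keepB lt I J = true := keepB_eq_true.mpr hJI
          rw [List.filter_cons, hkJ]
          simp only [if_pos trivial]
          rw [wordMeas_cons, wordMeas_cons, restrP_add,
            restrP_single_pos (fun K => ¬ lt K I) hJI]
          congr 1
          calc wordMeas lt ((τ.filter (keepB lt I)).filter (keepB lt J))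
              = wordMeas lt ((τ.filter (keepB lt J)).filter (keepB lt I)) := by
                rw [List.filter_filter, List.filter_filter]
                congr 1
                apply List.filter_congr
                intro a _
                rw [Bool.and_comm]
            _ = restrP (fun K => ¬ lt K I) (wordMeas lt (τ.filter (keepB lt J))) :=
                IH _ (hlenf _) I
  exact fun σ => key σ.length σ le_rfl

/-- Under transitivity, the measure of a concatenation is the measure of the first
word plus the restricted measure of the second. -/
lemma wordMeas_append (htrans : ∀ p q r : P, lt p q → lt q r → lt p r) :
    ∀ (σ τ : List P),
      wordMeas lt (σ ++ τ) =
        wordMeas lt σ + restrP (wNotBelow lt σ) (wordMeas lt τ) := by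
  have key : ∀ (n : ℕ) (σ : List P), σ.length ≤ n → ∀ τ,
      wordMeas lt (σ ++ τ) =
        wordMeas lt σ + restrP (wNotBelow lt σ) (wordMeas lt τ) := by
    intro n
    induction n with
    | zero =>
      intro σ h τ
      rw [List.eq_nil_of_length_eq_zero (Nat.le_zero.mp h)]
      rw [List.nil_append, wordMeas_nil, zero_add]
      ext K
      rw [restrP_apply_pos (wNotBelow lt []) (wordMeas lt τ)
        (show wNotBelow lt [] K by intro I hI; simp at hI)]
    | succ m IH =>
      intro σ h τ
      match σ with
      | [] =>
        rw [List.nil_append, wordMeas_nil, zero_add]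
        ext K
        rw [restrP_apply_pos (wNotBelow lt []) (wordMeas lt τ)
          (show wNotBelow lt [] K by intro I hI; simp at hI)]
      | I :: σ' =>
        have hlen : σ'.length ≤ m := by simpa using h
        have hlenf : (σ'.filter (keepB lt I)).length ≤ m :=
          le_trans (List.length_filter_le _ σ') hlen
        calc wordMeas lt ((I :: σ') ++ τ)
            = Finsupp.single I 1 + wordMeas lt ((σ' ++ τ).filter (keepB lt I)) := by
              rw [List.cons_append, wordMeas_cons]
          _ = Finsupp.single I 1 + wordMeas lt
                (σ'.filter (keepB lt I) ++ τ.filter (keepB lt I)) := by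
              rw [List.filter_append]
          _ = Finsupp.single I 1 + (wordMeas lt (σ'.filter (keepB lt I)) +
                restrP (wNotBelow lt (σ'.filter (keepB lt I)))
                  (wordMeas lt (τ.filter (keepB lt I)))) := by
              rw [IH _ hlenf (τ.filter (keepB lt I))]
          _ = wordMeas lt (I :: σ') + restrP (wNotBelow lt (σ'.filter (keepB lt I)))
                (wordMeas lt (τ.filter (keepB lt I))) := by
              rw [← add_assoc, ← wordMeas_cons]
          _ = wordMeas lt (I :: σ') + restrP (wNotBelow lt (σ'.filter (keepB lt I)))
                (restrP (fun K => ¬ lt K I) (wordMeas lt τ)) := by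
              rw [wordMeas_filter htrans τ I]
          _ = wordMeas lt (I :: σ') + restrP (wNotBelow lt (I :: σ')) (wordMeas lt τ) := by
              congr 1
              rw [restrP_restrP]
              apply restrP_congr
              intro K
              constructor
              · rintro ⟨hnb, hKI⟩ J hJ
                rcases List.mem_cons.mp hJ with rfl | hJσ'
                · exact hKI
                · intro hKJ
                  by_cases hJI : lt J I
                  · exact hKI (htrans K J I hKJ hJI)
                  · exact hnb J (List.mem_filter.mpr ⟨hJσ', keepB_eq_true.mpr hJI⟩) hKJ
              · intro hnb
                refine ⟨fun J hJ => hnb J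
                  (List.mem_cons_of_mem _ (List.mem_of_mem_filter hJ)),
                  hnb I List.mem_cons_self⟩
  exact fun σ => key σ.length σ le_rfl

end Auxiliary

/-- Pasting property of the word measure: two vertically stacked confluence diagrams
whose measures are bounded paste to a diagram whose measures are bounded. -/
theorem wordMeas_pasting {P : Type*} (lt : P → P → Prop)
    (hirr : ∀ p : P, ¬ lt p p)
    (htrans : ∀ p q r : P, lt p q → lt q r → lt p r)
    (hwf : WellFounded lt)
    (δ₀ γ₁ τ₁ δ₁ γ₂ τ₂ δ₂ : List P)
    (h₁ : DMLe lt (wordMeas lt (δ₀ ++ τ₁)) (wordMeas lt δ₀ + wordMeas lt γ₁))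
    (h₂ : DMLe lt (wordMeas lt (γ₁ ++ δ₁)) (wordMeas lt δ₀ + wordMeas lt γ₁))
    (h₃ : DMLe lt (wordMeas lt (δ₁ ++ τ₂)) (wordMeas lt δ₁ + wordMeas lt γ₂))
    (h₄ : DMLe lt (wordMeas lt (γ₂ ++ δ₂)) (wordMeas lt δ₁ + wordMeas lt γ₂)) :
    DMLe lt (wordMeas lt (δ₀ ++ τ₁ ++ τ₂)) (wordMeas lt δ₀ + wordMeas lt (γ₁ ++ γ₂)) ∧
    DMLe lt (wordMeas lt (γ₁ ++ γ₂ ++ δ₂)) (wordMeas lt δ₀ + wordMeas lt (γ₁ ++ γ₂)) := by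
  classical
  rw [dmle_iff_charle hirr htrans] at h₁ h₂ h₃ h₄
  rw [dmle_iff_charle hirr htrans, dmle_iff_charle hirr htrans]
  have hup : ∀ (σ : List P) (K J : P), lt K J → wNotBelow lt σ K → wNotBelow lt σ J :=
    fun σ K J hKJ hK I hI hJI => hK I hI (htrans K J I hKJ hJI)
  have e1 := wordMeas_append htrans (δ₀ ++ τ₁) τ₂
  have e2 := wordMeas_append htrans γ₁ δ₁
  have e3 := wordMeas_append htrans δ₁ τ₂
  have e4 := wordMeas_append htrans γ₂ δ₂
  have e5 := wordMeas_append htrans γ₁ γ₂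
  have e6 := wordMeas_append htrans (γ₁ ++ γ₂) δ₂
  have c₃ : CharLe lt (restrP (wNotBelow lt δ₁) (wordMeas lt τ₂)) (wordMeas lt γ₂) := by
    rw [e3] at h₃
    exact charle_cancel h₃
  have c₂ : CharLe lt (restrP (wNotBelow lt γ₁) (wordMeas lt δ₁)) (wordMeas lt δ₀) := by
    rw [e2, add_comm (wordMeas lt δ₀) (wordMeas lt γ₁)] at h₂
    exact charle_cancel h₂
  have c₄ : CharLe lt (restrP (wNotBelow lt γ₂) (wordMeas lt δ₂)) (wordMeas lt δ₁) := by
    rw [e4, add_comm (wordMeas lt δ₁) (wordMeas lt γ₂)] at h₄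
    exact charle_cancel h₄
  have nb_append : ∀ (ρ₁ ρ₂ : List P) (ν : P →₀ ℕ),
      restrP (wNotBelow lt (ρ₁ ++ ρ₂)) ν
        = restrP (wNotBelow lt ρ₁) (restrP (wNotBelow lt ρ₂) ν) := by
    intro ρ₁ ρ₂ ν
    rw [restrP_restrP]
    apply restrP_congr
    intro K
    simp [wNotBelow, List.mem_append, or_imp, forall_and]
  constructor
  · -- First goal
    have dcW : ∀ {I K : P},
        ((wordMeas lt δ₀ + wordMeas lt γ₁) I ≠ 0 ∨
          ∃ j, (wordMeas lt δ₀ + wordMeas lt γ₁) j ≠ 0 ∧ lt I j) → lt K I →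
        ∃ J, (wordMeas lt δ₀ + wordMeas lt γ₁) J ≠ 0 ∧ lt K J := by
      rintro I K (h | ⟨j, hj, hlt⟩) hKI
      exacts [⟨I, h, hKI⟩, ⟨j, hj, htrans _ _ _ hKI hlt⟩]
    have dcle_mono : ∀ {M N : P →₀ ℕ}, CharLe lt M N → ∀ x,
        (M x ≠ 0 ∨ ∃ j, M j ≠ 0 ∧ lt x j) →
        (N x ≠ 0 ∨ ∃ j, N j ≠ 0 ∧ lt x j) := by
      intro M N h
      have base : ∀ x, M x ≠ 0 → (N x ≠ 0 ∨ ∃ j, N j ≠ 0 ∧ lt x j) := by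
        intro x hx
        rcases h with ⟨hne, hc⟩ | rfl
        · by_cases hN : N x = 0
          · obtain ⟨J, hlt, hJ⟩ := hc x (by omega)
            exact Or.inr ⟨J, by omega, hlt⟩
          · exact Or.inl hN
        · exact Or.inl hx
      rintro x (hx | ⟨j, hj, hlt⟩)
      · exact base x hx
      · rcases base j hj with h' | ⟨j', hj', hlt'⟩
        · exact Or.inr ⟨j, h', hlt⟩
        · exact Or.inr ⟨j', hj', htrans x j j' hlt hlt'⟩
    have dcle_γ₁ : ∀ I ∈ γ₁, (wordMeas lt δ₀ + wordMeas lt γ₁) I ≠ 0 ∨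
        ∃ j, (wordMeas lt δ₀ + wordMeas lt γ₁) j ≠ 0 ∧ lt I j := by
      intro I hI
      rcases wordMeas_mem (lt := lt) γ₁ I hI with h | ⟨j, hj, hlt⟩
      · exact Or.inl (by simp only [Finsupp.add_apply]; omega)
      · exact Or.inr ⟨j, by simp only [Finsupp.add_apply]; omega, hlt⟩
    have dcle_δ₁ : ∀ I ∈ δ₁, (wordMeas lt δ₀ + wordMeas lt γ₁) I ≠ 0 ∨
        ∃ j, (wordMeas lt δ₀ + wordMeas lt γ₁) j ≠ 0 ∧ lt I j := by
      intro I hI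
      have h1 : I ∈ γ₁ ++ δ₁ := List.mem_append_right _ hI
      exact dcle_mono h₂ I (wordMeas_mem (lt := lt) (γ₁ ++ δ₁) I h1)
    -- KEY application
    have hkey : CharLe lt (wordMeas lt (δ₀ ++ τ₁) +
        restrP (fun K => ¬ (wNotBelow lt δ₁ K ∧ wNotBelow lt γ₁ K))
          (restrP (wNotBelow lt (δ₀ ++ τ₁)) (wordMeas lt τ₂)))
        (wordMeas lt δ₀ + wordMeas lt γ₁) := by
      apply charle_key hirr htrans h₁
      intro K hK
      have hqν : restrP (wNotBelow lt (δ₀ ++ τ₁)) (wordMeas lt τ₂) K ≠ 0 ∧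
          ¬ (wNotBelow lt δ₁ K ∧ wNotBelow lt γ₁ K) := by
        by_cases hqK : wNotBelow lt δ₁ K ∧ wNotBelow lt γ₁ K
        · rw [restrP_apply_neg
            (fun K => ¬ (wNotBelow lt δ₁ K ∧ wNotBelow lt γ₁ K)) _
            (not_not_intro hqK)] at hK
          exact absurd rfl hK
        · rw [restrP_apply_pos
            (fun K => ¬ (wNotBelow lt δ₁ K ∧ wNotBelow lt γ₁ K)) _ hqK] at hK
          exact ⟨hK, hqK⟩
      obtain ⟨hνK, hqK⟩ := hqν
      have hnbK : wNotBelow lt (δ₀ ++ τ₁) K := by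
        by_contra hnb
        rw [restrP_apply_neg (wNotBelow lt (δ₀ ++ τ₁)) _ hnb] at hνK
        exact hνK rfl
      constructor
      · rcases not_and_or.mp hqK with h | h
        · simp only [wNotBelow, not_forall] at h
          obtain ⟨I, hIδ₁, hKI⟩ := h
          exact dcW (dcle_δ₁ I hIδ₁) (by tauto)
        · simp only [wNotBelow, not_forall] at h
          obtain ⟨I, hIγ₁, hKI⟩ := h
          exact dcW (dcle_γ₁ I hIγ₁) (by tauto)
      · intro J hJ
        exact hnbK J (wordMeas_supp _ J hJ)
    -- step 2
    have hGle : ∀ K, restrP (wNotBelow lt δ₁)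
        (restrP (wNotBelow lt (δ₀ ++ τ₁)) (wordMeas lt τ₂)) K ≤
        restrP (wNotBelow lt δ₁) (wordMeas lt τ₂) K := by
      intro K
      by_cases hKδ : wNotBelow lt δ₁ K
      · rw [restrP_apply_pos (wNotBelow lt δ₁) _ hKδ,
          restrP_apply_pos (wNotBelow lt δ₁) _ hKδ]
        exact restrP_le _ _ K
      · rw [restrP_apply_neg (wNotBelow lt δ₁) _ hKδ,
          restrP_apply_neg (wNotBelow lt δ₁) _ hKδ]
    have s1 : CharLe lt (restrP (wNotBelow lt δ₁)
        (restrP (wNotBelow lt (δ₀ ++ τ₁)) (wordMeas lt τ₂))) (wordMeas lt γ₂) :=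
      charle_trans hirr htrans (charle_of_le hGle) c₃
    have s2 := charle_restrP htrans (hup γ₁) s1
    have hGdef : restrP (fun K => wNotBelow lt δ₁ K ∧ wNotBelow lt γ₁ K)
        (restrP (wNotBelow lt (δ₀ ++ τ₁)) (wordMeas lt τ₂))
        = restrP (wNotBelow lt γ₁) (restrP (wNotBelow lt δ₁)
            (restrP (wNotBelow lt (δ₀ ++ τ₁)) (wordMeas lt τ₂))) := by
      rw [restrP_restrP (wNotBelow lt γ₁) (wNotBelow lt δ₁)]
      exact restrP_congr _ (fun K => and_comm)
    have hGE := restrP_add_not (fun K => wNotBelow lt δ₁ K ∧ wNotBelow lt γ₁ K)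
      (restrP (wNotBelow lt (δ₀ ++ τ₁)) (wordMeas lt τ₂))
    have a1 : CharLe lt ((wordMeas lt (δ₀ ++ τ₁) +
        restrP (fun K => ¬ (wNotBelow lt δ₁ K ∧ wNotBelow lt γ₁ K))
          (restrP (wNotBelow lt (δ₀ ++ τ₁)) (wordMeas lt τ₂))) +
        restrP (fun K => wNotBelow lt δ₁ K ∧ wNotBelow lt γ₁ K)
          (restrP (wNotBelow lt (δ₀ ++ τ₁)) (wordMeas lt τ₂)))
        ((wordMeas lt δ₀ + wordMeas lt γ₁) +
        restrP (fun K => wNotBelow lt δ₁ K ∧ wNotBelow lt γ₁ K)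
          (restrP (wNotBelow lt (δ₀ ++ τ₁)) (wordMeas lt τ₂))) := by
      rw [add_comm _ (restrP (fun K => wNotBelow lt δ₁ K ∧ wNotBelow lt γ₁ K) _),
        add_comm (wordMeas lt δ₀ + wordMeas lt γ₁)
          (restrP (fun K => wNotBelow lt δ₁ K ∧ wNotBelow lt γ₁ K) _)]
      exact charle_add_left hkey
    have a2 : CharLe lt ((wordMeas lt δ₀ + wordMeas lt γ₁) +
        restrP (fun K => wNotBelow lt δ₁ K ∧ wNotBelow lt γ₁ K)
          (restrP (wNotBelow lt (δ₀ ++ τ₁)) (wordMeas lt τ₂)))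
        ((wordMeas lt δ₀ + wordMeas lt γ₁) +
          restrP (wNotBelow lt γ₁) (wordMeas lt γ₂)) := by
      rw [hGdef]
      exact charle_add_left s2
    have a3 := charle_trans hirr htrans a1 a2
    have heq : (wordMeas lt (δ₀ ++ τ₁) +
        restrP (fun K => ¬ (wNotBelow lt δ₁ K ∧ wNotBelow lt γ₁ K))
          (restrP (wNotBelow lt (δ₀ ++ τ₁)) (wordMeas lt τ₂))) +
        restrP (fun K => wNotBelow lt δ₁ K ∧ wNotBelow lt γ₁ K)
          (restrP (wNotBelow lt (δ₀ ++ τ₁)) (wordMeas lt τ₂))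
        = wordMeas lt (δ₀ ++ τ₁) + restrP (wNotBelow lt (δ₀ ++ τ₁)) (wordMeas lt τ₂) := by
      rw [add_assoc, add_comm (restrP (fun K => ¬ (wNotBelow lt δ₁ K ∧ wNotBelow lt γ₁ K)) _)
        (restrP (fun K => wNotBelow lt δ₁ K ∧ wNotBelow lt γ₁ K) _), hGE]
    rw [heq] at a3
    rw [e1, e5, ← add_assoc]
    exact a3
  · -- Second goal
    have g2a := charle_restrP htrans (hup γ₁) c₄
    have g2b := charle_trans hirr htrans g2a c₂
    rw [e6, nb_append γ₁ γ₂ (wordMeas lt δ₂),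
      add_comm (wordMeas lt δ₀) (wordMeas lt (γ₁ ++ γ₂))]
    exact charle_add_left g2b
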